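/- Let d ≥ 2, let W : Fin d → Fin d → ℝ be a channel with strictly positive entries and rows probability vectors, fix inputs a ≠ b, set w(y) = W(y|b)/W(y|a) and I = χ²(W(·|b)‖W(·|a)) = ∑_y W(y|a)(w(y) − 1)². Let n ≥ 1, let Y₁,…,Y_n be i.i.d. with law W(·|a), and let L = (1/n) ∑_{i=1}^n w(Y_i). Then for every ε > 0: (i) E[(L − e^ε)₊] ≤ I/(n(e^ε − 1)); and (ii) E[(1 − e^ε L)₊] ≤ e^ε I/(n(1 − e^{−ε})). -/

import Mathlib

open Finset BigOperators

/-- Independence over product measure: sum over tuples of a product factorizes. -/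
lemma sum_prod_tuple (n d : ℕ) (h : Fin n → Fin d → ℝ) :
    ∑ Y : Fin n → Fin d, ∏ i, h i (Y i) = ∏ i, ∑ y, h i y := by
  rw [Finset.prod_univ_sum, Fintype.piFinset_univ]

lemma pt1 {x c : ℝ} (hc : 1 < c) : max (x - c) 0 ≤ (x - 1) ^ 2 / (c - 1) := by
  rcases le_or_gt x c with hx | hx
  · have h0 : max (x - c) 0 = 0 := max_eq_right (by linarith)
    rw [h0]
    exact div_nonneg (sq_nonneg _) (by linarith)
  · have h0 : max (x - c) 0 = x - c := max_eq_left (by linarith)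
    rw [h0, le_div_iff₀ (by linarith)]
    nlinarith [sq_nonneg (x - c), sq_nonneg (c - 1)]

lemma pt2 {x c : ℝ} (hc : 1 < c) :
    max (1 - c * x) 0 ≤ c * (x - 1) ^ 2 / (1 - c⁻¹) := by
  have hc0 : (0:ℝ) < c := by linarith
  have hu : (0:ℝ) < c⁻¹ := inv_pos.mpr hc0
  have hu1 : c⁻¹ < 1 := inv_lt_one_of_one_lt₀ hc
  have hcu : c * c⁻¹ = 1 := mul_inv_cancel₀ (ne_of_gt hc0)
  rcases le_or_gt (1 - c * x) 0 with hx | hx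
  · have h0 : max (1 - c * x) 0 = 0 := max_eq_right hx
    rw [h0, le_div_iff₀ (by linarith)]
    nlinarith [sq_nonneg (x - 1)]
  · have hmax : max (1 - c * x) 0 = 1 - c * x := max_eq_left (by linarith)
    rw [hmax, le_div_iff₀ (by linarith)]
    have hxu : x < c⁻¹ := by nlinarith
    nlinarith [sq_nonneg (x - 1), mul_nonneg (le_of_lt hc0) (sq_nonneg (x - 1))]

set_option maxHeartbeats 1000000 in
/-- **Fixed-ε privacy-curve bounds** (Theorem 6.2(v)).  With `w(y) = W(y|b)/W(y|a)`,
`I = χ²(W(·|b)‖W(·|a))`, and `L = (1/n)∑ᵢ w(Yᵢ)` for `Y₁,…,Yₙ` i.i.d. from `W(·|a)`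
(expectations written as explicit finite sums over sample tuples), for every `ε > 0`:
(i) `E[(L − e^ε)₊] ≤ I/(n(e^ε − 1))` and (ii) `E[(1 − e^ε L)₊] ≤ e^ε I/(n(1 − e^{−ε}))`. -/
theorem fixed_eps_privacy_bounds (d n : ℕ) (hd : 2 ≤ d) (hn : 1 ≤ n)
    (W : Fin d → Fin d → ℝ)
    (hpos : ∀ x y, 0 < W x y)
    (hrow : ∀ x, ∑ y, W x y = 1)
    (a b : Fin d) (hab : a ≠ b)
    (w : Fin d → ℝ) (hw : ∀ y, w y = W b y / W a y)
    (I : ℝ) (hI : I = ∑ y, W a y * (w y - 1) ^ 2)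
    (L : (Fin n → Fin d) → ℝ) (hL : ∀ Y, L Y = (1 / (n : ℝ)) * ∑ i, w (Y i))
    (ε : ℝ) (hε : 0 < ε) :
    (∑ Y : Fin n → Fin d, (∏ i, W a (Y i)) * max (L Y - Real.exp ε) 0
        ≤ I / (n * (Real.exp ε - 1)))
    ∧ (∑ Y : Fin n → Fin d, (∏ i, W a (Y i)) * max (1 - Real.exp ε * L Y) 0
        ≤ Real.exp ε * I / (n * (1 - Real.exp (-ε)))) := by
  set c := Real.exp ε with hc
  have hc1 : 1 < c := by
    have := Real.add_one_le_exp ε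
    simp only [hc]; linarith
  have hn0 : (0:ℝ) < (n:ℝ) := by exact_mod_cast hn
  set g : Fin d → ℝ := fun y => w y - 1 with hg
  set μ : (Fin n → Fin d) → ℝ := fun Y => ∏ i, W a (Y i) with hμ
  have hμnn : ∀ Y, 0 ≤ μ Y := fun Y => Finset.prod_nonneg fun i _ => (hpos a (Y i)).le
  -- mean zero
  have hg0 : ∑ y, W a y * g y = 0 := by
    have h1 : ∑ y, W a y * w y = 1 := by
      rw [← hrow b]
      refine Finset.sum_congr rfl fun y _ => ?_
      rw [hw y, mul_comm, div_mul_cancel₀ _ (ne_of_gt (hpos a y))]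
    simp only [hg, mul_sub, mul_one, Finset.sum_sub_distrib, h1, hrow a, sub_self]
  have hg2 : ∑ y, W a y * (g y * g y) = I := by
    rw [hI]
    exact Finset.sum_congr rfl fun y _ => by rw [sq]
  -- second-moment computation
  have hT : ∀ i j : Fin n, (∑ Y : Fin n → Fin d, μ Y * (g (Y i) * g (Y j)))
      = if i = j then I else 0 := by
    intro i j
    set h : Fin n → Fin d → ℝ :=
      fun k y => W a y * (if k = i then g y else 1) * (if k = j then g y else 1) with hh
    have hrw : ∀ Y : Fin n → Fin d, μ Y * (g (Y i) * g (Y j)) = ∏ k, h k (Y k) := by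
      intro Y
      simp only [hh]
      rw [Finset.prod_mul_distrib, Finset.prod_mul_distrib,
        Finset.prod_ite_eq' Finset.univ i (fun k => g (Y k)),
        Finset.prod_ite_eq' Finset.univ j (fun k => g (Y k))]
      simp [hμ, mul_assoc]
    calc ∑ Y : Fin n → Fin d, μ Y * (g (Y i) * g (Y j))
        = ∑ Y : Fin n → Fin d, ∏ k, h k (Y k) :=
          Finset.sum_congr rfl fun Y _ => hrw Y
      _ = ∏ k, ∑ y, h k y := sum_prod_tuple n d h
      _ = ∏ k, ∑ y, W a y * (if k = i then g y else 1) * (if k = j then g y else 1) := by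
          simp only [hh]
      _ = if i = j then I else 0 := by
          by_cases hij : i = j
          · subst hij
            rw [if_pos rfl]
            rw [Finset.prod_eq_single i]
            · rw [← hg2]
              refine Finset.sum_congr rfl fun y _ => ?_
              simp only [eq_self_iff_true, if_true]
              ring
            · intro k _ hk
              simp only [if_neg hk, mul_one]
              exact hrow a
            · intro h; exact absurd (Finset.mem_univ i) h
          · rw [if_neg hij]
            apply Finset.prod_eq_zero (Finset.mem_univ i)
            simp only [if_pos rfl, if_neg hij]
            calc ∑ y, W a y * g y * 1 = ∑ y, W a y * g y := by simp
              _ = 0 := hg0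
  have hvar2 : ∑ Y : Fin n → Fin d, μ Y * (∑ i, g (Y i)) ^ 2 = n * I := by
    have hexp : ∀ Y : Fin n → Fin d, μ Y * (∑ i, g (Y i)) ^ 2
        = ∑ i, ∑ j, μ Y * (g (Y i) * g (Y j)) := by
      intro Y
      rw [sq, Finset.sum_mul_sum]
      rw [Finset.mul_sum]
      exact Finset.sum_congr rfl fun i _ => by rw [Finset.mul_sum]
    calc ∑ Y : Fin n → Fin d, μ Y * (∑ i, g (Y i)) ^ 2
        = ∑ Y : Fin n → Fin d, ∑ i, ∑ j, μ Y * (g (Y i) * g (Y j)) :=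
          Finset.sum_congr rfl fun Y _ => hexp Y
      _ = ∑ i, ∑ Y : Fin n → Fin d, ∑ j, μ Y * (g (Y i) * g (Y j)) := Finset.sum_comm
      _ = ∑ i : Fin n, ∑ j, ∑ Y : Fin n → Fin d, μ Y * (g (Y i) * g (Y j)) :=
          Finset.sum_congr rfl fun i _ => Finset.sum_comm
      _ = ∑ i : Fin n, ∑ j, if i = j then I else 0 :=
          Finset.sum_congr rfl fun i _ => Finset.sum_congr rfl fun j _ => hT i j
      _ = ∑ i : Fin n, I := Finset.sum_congr rfl fun i _ => by
            rw [Finset.sum_ite_eq (Finset.univ) i (fun _ => I)]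
            simp
      _ = n * I := by simp [mul_comm]
  have hLg : ∀ Y : Fin n → Fin d, L Y - 1 = (1 / (n:ℝ)) * ∑ i, g (Y i) := by
    intro Y
    rw [hL Y]
    simp only [hg]
    rw [Finset.sum_sub_distrib]
    push_cast
    field_simp
    simp
  have hvar : ∑ Y : Fin n → Fin d, μ Y * (L Y - 1) ^ 2 = I / n := by
    calc ∑ Y : Fin n → Fin d, μ Y * (L Y - 1) ^ 2
        = ∑ Y : Fin n → Fin d, (1 / (n:ℝ))^2 * (μ Y * (∑ i, g (Y i)) ^ 2) :=
          Finset.sum_congr rfl fun Y _ => by rw [hLg Y]; ring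
      _ = (1 / (n:ℝ))^2 * (n * I) := by rw [← Finset.mul_sum, hvar2]
      _ = I / n := by field_simp
  constructor
  · calc ∑ Y : Fin n → Fin d, μ Y * max (L Y - c) 0
        ≤ ∑ Y : Fin n → Fin d, μ Y * ((L Y - 1) ^ 2 / (c - 1)) :=
          Finset.sum_le_sum fun Y _ => mul_le_mul_of_nonneg_left (pt1 hc1) (hμnn Y)
      _ = (∑ Y : Fin n → Fin d, μ Y * (L Y - 1) ^ 2) / (c - 1) := by
          rw [Finset.sum_div]
          exact Finset.sum_congr rfl fun Y _ => by ring
      _ = I / (n * (c - 1)) := by rw [hvar, div_div]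
  · have hcinv : Real.exp (-ε) = c⁻¹ := by rw [hc, ← Real.exp_neg]
    rw [hcinv]
    calc ∑ Y : Fin n → Fin d, μ Y * max (1 - c * L Y) 0
        ≤ ∑ Y : Fin n → Fin d, μ Y * (c * (L Y - 1) ^ 2 / (1 - c⁻¹)) :=
          Finset.sum_le_sum fun Y _ => mul_le_mul_of_nonneg_left (pt2 hc1) (hμnn Y)
      _ = c / (1 - c⁻¹) * ∑ Y : Fin n → Fin d, μ Y * (L Y - 1) ^ 2 := by
          rw [Finset.mul_sum]
          exact Finset.sum_congr rfl fun Y _ => by ring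
      _ = c * I / (n * (1 - c⁻¹)) := by
          rw [hvar]
          have h1 : (1:ℝ) - c⁻¹ ≠ 0 := by
            have : c⁻¹ < 1 := inv_lt_one_of_one_lt₀ hc1
            linarith
          field_simp
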